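/- Let F₂ be the free group on free generators a₁, a₂, let V = F₂ (vertices) and E = F₂ × {1,2} (edges, the edge (g,i) joining g to g·aᵢ). Define linear maps on finitely supported functions: ∂ : ℂ[E] → ℂ[V] by ∂(δ_{(g,i)}) = δ_{g·aᵢ} − δ_g, and h : ℂ[V] → ℂ[E] by h(δ_g) = ∑_{j=1}^{n} ε_j δ_{e_j}, where g = σ₁σ₂⋯σ_n is the reduced word of g and, for each j, if σ_j = a_i then e_j = (σ₁⋯σ_{j−1}, i) with ε_j = +1, while if σ_j = a_i^{−1} then e_j = (σ₁⋯σ_j, i) with ε_j = −1. Then: (1) ∂ ∘ h = Id − p₁ on ℂ[V], where p₁(f) = (∑_{g} f(g))·δ₁ is the rank-one map onto the basis vector at the identity; and (2) h ∘ ∂ = Id on ℂ[E]. -/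

import Mathlib

open scoped BigOperators

/-- Vertices of the Cayley tree of the free group on two generators. -/
abbrev JVVert := FreeGroup (Fin 2)

/-- Edges of the Cayley tree: the edge `(g, i)` joins `g` to `g * aᵢ`. -/
abbrev JVEdge := FreeGroup (Fin 2) × Fin 2

/-- The simplicial boundary `∂ : ℂ[E] → ℂ[V]`, `∂ δ_{(g,i)} = δ_{g·aᵢ} - δ_g`. -/
noncomputable def jvBoundary : (JVEdge →₀ ℂ) →ₗ[ℂ] (JVVert →₀ ℂ) :=
  Finsupp.lsum ℂ fun e =>
    LinearMap.toSpanSingleton ℂ (JVVert →₀ ℂ)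
      (Finsupp.single (e.1 * FreeGroup.of e.2) 1 - Finsupp.single e.1 1)

/-- The contribution of the `j`-th letter (`0`-indexed) of a reduced word `L` to the
Julg–Valette contraction: if the letter is a generator `aᵢ` the term is `+δ_{(prefix, i)}`
where the prefix has length `j`; if it is an inverse `aᵢ⁻¹` the term is `-δ_{(prefix, i)}`
where the prefix has length `j+1`. -/
noncomputable def jvTerm (L : List (Fin 2 × Bool)) (j : ℕ) : JVEdge →₀ ℂ :=
  let σ := L.getD j default
  if σ.2 then Finsupp.single (FreeGroup.mk (L.take j), σ.1) 1
  else -Finsupp.single (FreeGroup.mk (L.take (j + 1)), σ.1) 1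

/-- The Julg–Valette contraction `h : ℂ[V] → ℂ[E]` sending `δ_g` to the signed sum of the
edges of the geodesic from `g` to the identity, read off from the reduced word of `g`. -/
noncomputable def jvH : (JVVert →₀ ℂ) →ₗ[ℂ] (JVEdge →₀ ℂ) :=
  Finsupp.lsum ℂ fun g =>
    LinearMap.toSpanSingleton ℂ (JVEdge →₀ ℂ)
      (∑ j ∈ Finset.range (FreeGroup.toWord g).length, jvTerm (FreeGroup.toWord g) j)

/-- The rank-one map `p₁ : ℂ[V] → ℂ[V]`, `f ↦ (∑_g f(g)) · δ₁`. -/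
noncomputable def jvProjOne : (JVVert →₀ ℂ) →ₗ[ℂ] (JVVert →₀ ℂ) :=
  Finsupp.lsum ℂ fun _ =>
    LinearMap.toSpanSingleton ℂ (JVVert →₀ ℂ) (Finsupp.single 1 1)

namespace JVAux

theorem reduced_cons {α : Type*} [DecidableEq α] {a : α × Bool} {t : List (α × Bool)}
    (h : FreeGroup.reduce (a :: t) = a :: t) :
    FreeGroup.reduce t = t ∧ ∀ b s, t = b :: s → ¬(a.1 = b.1 ∧ a.2 = !b.2) := by
  rw [FreeGroup.reduce.cons] at h
  rcases hr : FreeGroup.reduce t with _ | ⟨b, s⟩ <;> rw [hr] at h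
  · simp only [List.cons.injEq, true_and] at h
    obtain rfl : t = [] := h.symm
    exact ⟨rfl, by simp⟩
  · simp only at h
    split_ifs at h with hc
    · exfalso
      have hle := FreeGroup.Red.length_le (FreeGroup.reduce.red (L := t))
      rw [hr] at hle
      have := congrArg List.length h
      simp at this hle
      omega
    · obtain ⟨-, rfl⟩ : a = a ∧ t = b :: s := by
        simpa [List.cons.injEq] using h.symm
      exact ⟨rfl, fun b' s' ht => by cases ht; exact hc⟩

theorem reduce_concat {α : Type*} [DecidableEq α] :
    ∀ {w : List (α × Bool)}, FreeGroup.reduce w = w → ∀ x : α × Bool,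
      FreeGroup.reduce (w ++ [x]) =
        if w.getLast? = some (x.1, !x.2) then w.dropLast else w ++ [x]
  | [], _, x => by simp
  | a :: t, hw, x => by
    obtain ⟨ht, hna⟩ := reduced_cons hw
    have ih := reduce_concat ht x
    rw [List.cons_append, FreeGroup.reduce.cons, ih]
    rcases t with _ | ⟨b, t'⟩
    · by_cases hax : a.1 = x.1 ∧ a.2 = !x.2
      · simp [hax, Prod.ext_iff]
      · simp [hax, Prod.ext_iff]
    · have hnab : ¬(a.1 = b.1 ∧ a.2 = !b.2) := hna b t' rfl
      by_cases hl : (b :: t').getLast? = some (x.1, !x.2)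
      · rw [if_pos hl, if_pos (by rwa [List.getLast?_cons_cons])]
        rcases t' with _ | ⟨c, t''⟩
        · simp
        · simp [hnab]
      · rw [if_neg hl, if_neg (by rwa [List.getLast?_cons_cons])]
        simp [hnab]

theorem toWord_mul_of (g : FreeGroup (Fin 2)) (i : Fin 2) :
    (g * FreeGroup.of i).toWord =
      if g.toWord.getLast? = some (i, false) then g.toWord.dropLast
      else g.toWord ++ [(i, true)] := by
  conv_lhs => rw [← FreeGroup.mk_toWord (x := g)]
  rw [show FreeGroup.of i = FreeGroup.mk [(i, true)] from rfl, FreeGroup.mul_mk,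
    FreeGroup.toWord_mk, reduce_concat (FreeGroup.reduce_toWord g) (i, true)]
  norm_num

theorem mk_single_false (i : Fin 2) :
    FreeGroup.mk [(i, false)] = (FreeGroup.of i)⁻¹ := by
  rw [show FreeGroup.of i = FreeGroup.mk [(i, true)] from rfl, FreeGroup.inv_mk]
  simp [FreeGroup.invRev]

theorem jvTerm_def (L : List (Fin 2 × Bool)) (j : ℕ) :
    jvTerm L j =
      if (L.getD j default).2 then
        Finsupp.single (FreeGroup.mk (L.take j), (L.getD j default).1) 1
      else -Finsupp.single (FreeGroup.mk (L.take (j + 1)), (L.getD j default).1) 1 := rfl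

theorem jvBoundary_single (e : JVEdge) :
    jvBoundary (Finsupp.single e 1) =
      Finsupp.single (e.1 * FreeGroup.of e.2) 1 - Finsupp.single e.1 1 := by
  simp [jvBoundary]

theorem jvBoundary_term {L : List (Fin 2 × Bool)} {j : ℕ} (hj : j < L.length) :
    jvBoundary (jvTerm L j) =
      Finsupp.single (FreeGroup.mk (L.take (j + 1))) 1
        - Finsupp.single (FreeGroup.mk (L.take j)) 1 := by
  have hget : L.getD j default = L[j] := List.getD_eq_getElem L default hj
  have htake : L.take (j + 1) = L.take j ++ [L[j]] := by
    rw [List.take_succ, List.getElem?_eq_getElem hj]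
    rfl
  rw [jvTerm_def, hget]
  rcases hb : (L[j] : Fin 2 × Bool).2 with _ | _
  · rw [if_neg (by simp [hb]), map_neg, jvBoundary_single, neg_sub]
    have hm : FreeGroup.mk (L.take (j + 1)) * FreeGroup.of (L[j] : Fin 2 × Bool).1
        = FreeGroup.mk (L.take j) := by
      have : L[j] = ((L[j] : Fin 2 × Bool).1, false) := by
        rw [← hb]
      rw [htake, this, ← FreeGroup.mul_mk, mk_single_false, inv_mul_cancel_right]
    rw [hm]
  · rw [if_pos (by simp [hb]), jvBoundary_single]
    have hm : FreeGroup.mk (L.take j) * FreeGroup.of (L[j] : Fin 2 × Bool).1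
        = FreeGroup.mk (L.take (j + 1)) := by
      have hx : L[j] = ((L[j] : Fin 2 × Bool).1, true) := by
        rw [← hb]
      rw [htake, ← FreeGroup.mul_mk]
      congr 1
      rw [hx]
      rfl
    rw [hm]

noncomputable def jvSum (L : List (Fin 2 × Bool)) : JVEdge →₀ ℂ :=
  ∑ j ∈ Finset.range L.length, jvTerm L j

theorem jvBoundary_jvSum (L : List (Fin 2 × Bool)) :
    jvBoundary (jvSum L) =
      Finsupp.single (FreeGroup.mk L) 1 - Finsupp.single 1 1 := by
  rw [jvSum, map_sum,
    Finset.sum_congr rfl (fun j hj => jvBoundary_term (Finset.mem_range.mp hj)),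
    Finset.sum_range_sub (fun j => Finsupp.single (FreeGroup.mk (L.take j)) 1)]
  simp [FreeGroup.one_eq_mk]

theorem jvTerm_append {L M : List (Fin 2 × Bool)} {j : ℕ} (hj : j < L.length) :
    jvTerm (L ++ M) j = jvTerm L j := by
  rw [jvTerm_def, jvTerm_def, List.getD_append _ _ _ _ hj,
    List.take_append_of_le_length (le_of_lt hj), List.take_append_of_le_length hj]

theorem jvTerm_concat_last (u : List (Fin 2 × Bool)) (x : Fin 2 × Bool) :
    jvTerm (u ++ [x]) u.length =
      if x.2 then Finsupp.single (FreeGroup.mk u, x.1) 1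
      else -Finsupp.single (FreeGroup.mk (u ++ [x]), x.1) 1 := by
  have hg : (u ++ [x]).getD u.length default = x := by
    rw [List.getD_eq_getElem _ _ (by simp)]
    exact List.getElem_concat_length (l := u) (a := x) rfl _
  have hlen : u.length + 1 = (u ++ [x]).length := by simp
  rw [jvTerm_def, hg, List.take_left, hlen, List.take_length]

theorem jvSum_concat (L : List (Fin 2 × Bool)) (x : Fin 2 × Bool) :
    jvSum (L ++ [x]) = jvSum L + jvTerm (L ++ [x]) L.length := by
  rw [jvSum, jvSum, show (L ++ [x]).length = L.length + 1 by simp, Finset.sum_range_succ]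
  congr 1
  exact Finset.sum_congr rfl fun j hj => jvTerm_append (Finset.mem_range.mp hj)

theorem jvH_single (g : JVVert) :
    jvH (Finsupp.single g 1) = jvSum (FreeGroup.toWord g) := by
  simp [jvH, jvSum]

theorem jvProjOne_single (g : JVVert) :
    jvProjOne (Finsupp.single g 1) = Finsupp.single 1 1 := by
  simp [jvProjOne]

end JVAux

open JVAux in
/-- **The Julg–Valette contracting chain homotopy for the Cayley tree of `F₂`.**
`∂ ∘ h = Id - p₁` on `ℂ[V]` and `h ∘ ∂ = Id` on `ℂ[E]`. -/
theorem julg_valette_homotopy :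
    jvBoundary ∘ₗ jvH = LinearMap.id - jvProjOne ∧
      jvH ∘ₗ jvBoundary = LinearMap.id := by
  constructor
  · apply Finsupp.lhom_ext
    intro g b
    have hb : (Finsupp.single g b : JVVert →₀ ℂ) = b • Finsupp.single g 1 := by
      simp [Finsupp.smul_single]
    rw [hb]
    simp only [map_smul, LinearMap.comp_apply, LinearMap.sub_apply, LinearMap.id_apply]
    congr 1
    rw [jvH_single, jvBoundary_jvSum, FreeGroup.mk_toWord, jvProjOne_single]
  · apply Finsupp.lhom_ext
    rintro ⟨g, i⟩ b
    have hb : (Finsupp.single (g, i) b : JVEdge →₀ ℂ) = b • Finsupp.single (g, i) 1 := by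
      simp [Finsupp.smul_single]
    rw [hb]
    simp only [map_smul, LinearMap.comp_apply, LinearMap.id_apply]
    congr 1
    rw [jvBoundary_single, map_sub, jvH_single, jvH_single]
    simp only
    rw [toWord_mul_of]
    set w := FreeGroup.toWord g with hwdef
    by_cases hl : w.getLast? = some (i, false)
    · rw [if_pos hl]
      have hw : w ≠ [] := by intro h; rw [h] at hl; simp at hl
      have hlast : w.getLast hw = (i, false) := by
        have := List.getLast?_eq_getLast (l := w) hw
        rw [hl] at this
        exact (Option.some_inj.mp this).symm
      have hsplit : w.dropLast ++ [(i, false)] = w := by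
        rw [← hlast]; exact List.dropLast_append_getLast hw
      have hS : jvSum w = jvSum w.dropLast - Finsupp.single ((g : JVVert), i) 1 := by
        conv_lhs => rw [← hsplit]
        rw [jvSum_concat, jvTerm_concat_last]
        rw [if_neg (by simp), hsplit, hwdef, FreeGroup.mk_toWord]
        simp [sub_eq_add_neg]
      rw [hS]
      abel
    · rw [if_neg hl, jvSum_concat, jvTerm_concat_last, if_pos rfl, hwdef,
        FreeGroup.mk_toWord]
      simp
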